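/- Let λ > 0, let (E_k)_{k≥1} be i.i.d. exponential random variables with rate λ, put τ_k = E_1 + ⋯ + E_k, and let (ξ_k)_{k≥1} be i.i.d. ℝ^d-valued random variables independent of (E_k). Then the series Σ_{k=1}^∞ e^{−τ_k} ξ_k converges almost surely if and only if E[log(1 + ‖ξ₁‖)] < ∞. (Example 1 of Section 4.) -/

import Mathlib

open MeasureTheory Filter Set ProbabilityTheory

open scoped ENNReal NNReal Topology

section AuxLemmas
open Real


/-- If the "layer-cake" integral is finite, the tail sums are summable. -/
lemma my_tail_sum_ne_top {Ω : Type*} [MeasurableSpace Ω] (μ : Measure Ω) [IsProbabilityMeasure μ]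
    {Y : Ω → ℝ} (hYm : Measurable Y) (hY : ∀ ω, 0 ≤ Y ω) {c : ℝ} (hc : 0 < c)
    (hint : ∫⁻ ω, ENNReal.ofReal (Y ω) ∂μ ≠ ⊤) :
    ∑' k : ℕ, μ {ω | c * k < Y ω} ≠ ⊤ := by
  have hms : ∀ k : ℕ, MeasurableSet {ω | c * (k : ℝ) < Y ω} := fun k =>
    measurableSet_lt measurable_const hYm
  have key : ∑' k : ℕ, μ {ω | c * (k : ℝ) < Y ω}
      ≤ ENNReal.ofReal c⁻¹ * ∫⁻ ω, ENNReal.ofReal (Y ω) ∂μ + 1 := by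
    calc ∑' k : ℕ, μ {ω | c * (k : ℝ) < Y ω}
        = ∫⁻ ω, ∑' k : ℕ, ({ω | c * (k:ℝ) < Y ω}).indicator (1 : Ω → ℝ≥0∞) ω ∂μ := by
          rw [lintegral_tsum (fun k => ((measurable_one.indicator (hms k))).aemeasurable)]
          exact tsum_congr fun k => (lintegral_indicator_one (hms k)).symm
      _ ≤ ∫⁻ ω, (ENNReal.ofReal c⁻¹ * ENNReal.ofReal (Y ω) + 1) ∂μ := by
          apply lintegral_mono
          intro ω
          dsimp only
          set N : ℕ := Nat.ceil (Y ω / c) with hN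
          have hvanish : ∀ k ∉ Finset.range N,
              ({ω | c * (k:ℝ) < Y ω}).indicator (1 : Ω → ℝ≥0∞) ω = 0 := by
            intro k hk
            apply Set.indicator_of_notMem
            simp only [Finset.mem_range, not_lt] at hk
            simp only [Set.mem_setOf_eq, not_lt]
            have h1 : Y ω / c ≤ (N:ℝ) := Nat.le_ceil _
            have h2 : (N:ℝ) ≤ (k:ℝ) := by exact_mod_cast hk
            calc Y ω = c * (Y ω / c) := by field_simp
              _ ≤ c * k := by nlinarith
          rw [tsum_eq_sum hvanish]
          have hsum_le : ∑ k ∈ Finset.range N,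
              ({ω | c * (k:ℝ) < Y ω}).indicator (1 : Ω → ℝ≥0∞) ω ≤ (N : ℝ≥0∞) := by
            calc ∑ k ∈ Finset.range N, ({ω | c * (k:ℝ) < Y ω}).indicator (1 : Ω → ℝ≥0∞) ω
                ≤ ∑ _k ∈ Finset.range N, (1:ℝ≥0∞) := by
                  refine Finset.sum_le_sum fun k _ => ?_
                  by_cases hω : ω ∈ {ω | c * (k:ℝ) < Y ω}
                  · rw [Set.indicator_of_mem hω]; exact le_rfl
                  · rw [Set.indicator_of_notMem hω]; exact zero_le_one
              _ = (N : ℝ≥0∞) := by simp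
          refine hsum_le.trans ?_
          have hNle : (N : ℝ) ≤ Y ω / c + 1 :=
            (Nat.ceil_lt_add_one (div_nonneg (hY ω) hc.le)).le
          calc (N : ℝ≥0∞) = ENNReal.ofReal (N : ℝ) := by
                rw [ENNReal.ofReal_natCast]
            _ ≤ ENNReal.ofReal (Y ω / c + 1) := ENNReal.ofReal_le_ofReal hNle
            _ ≤ ENNReal.ofReal c⁻¹ * ENNReal.ofReal (Y ω) + 1 := by
                rw [ENNReal.ofReal_add (div_nonneg (hY ω) hc.le) zero_le_one, ENNReal.ofReal_one]
                gcongr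
                rw [div_eq_inv_mul, ENNReal.ofReal_mul (by positivity)]
      _ = ENNReal.ofReal c⁻¹ * ∫⁻ ω, ENNReal.ofReal (Y ω) ∂μ + 1 := by
          rw [lintegral_add_right _ measurable_const, lintegral_const_mul _ hYm.ennreal_ofReal]
          simp
  have hfin : ENNReal.ofReal c⁻¹ * ∫⁻ ω, ENNReal.ofReal (Y ω) ∂μ + 1 ≠ ⊤ :=
    (ENNReal.add_lt_top.mpr ⟨ENNReal.mul_lt_top ENNReal.ofReal_lt_top hint.lt_top,
      ENNReal.one_lt_top⟩).ne
  exact ne_top_of_le_ne_top hfin key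

/-- Conversely, if the tail sums are summable then the integral is finite. -/
lemma my_lintegral_lt_top_of_tail_sum {Ω : Type*} [MeasurableSpace Ω] (μ : Measure Ω)
    [IsProbabilityMeasure μ]
    {Y : Ω → ℝ} (hYm : Measurable Y) (hY : ∀ ω, 0 ≤ Y ω) {c : ℝ} (hc : 0 < c)
    (h : ∑' k : ℕ, μ {ω | c * k < Y ω} ≠ ⊤) :
    ∫⁻ ω, ENNReal.ofReal (Y ω) ∂μ < ⊤ := by
  have hms : ∀ k : ℕ, MeasurableSet {ω | c * (k : ℝ) < Y ω} := fun k =>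
    measurableSet_lt measurable_const hYm
  have key : ∫⁻ ω, ENNReal.ofReal (Y ω) ∂μ
      ≤ ENNReal.ofReal c * ∑' k : ℕ, μ {ω | c * (k:ℝ) < Y ω} := by
    calc ∫⁻ ω, ENNReal.ofReal (Y ω) ∂μ
        ≤ ∫⁻ ω, ENNReal.ofReal c *
            ∑' k : ℕ, ({ω | c * (k:ℝ) < Y ω}).indicator (1 : Ω → ℝ≥0∞) ω ∂μ := by
          apply lintegral_mono
          intro ω
          dsimp only
          set N : ℕ := Nat.ceil (Y ω / c) with hN
          have h1 : ENNReal.ofReal (Y ω) ≤ ENNReal.ofReal c * N := by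
            rw [← ENNReal.ofReal_natCast, ← ENNReal.ofReal_mul hc.le]
            apply ENNReal.ofReal_le_ofReal
            have : Y ω / c ≤ (N:ℝ) := Nat.le_ceil _
            calc Y ω = c * (Y ω / c) := by field_simp
              _ ≤ c * N := by nlinarith
          refine h1.trans ?_
          gcongr
          calc (N : ℝ≥0∞) = ∑ _k ∈ Finset.range N, (1:ℝ≥0∞) := by simp
            _ ≤ ∑ k ∈ Finset.range N,
                ({ω | c * (k:ℝ) < Y ω}).indicator (1 : Ω → ℝ≥0∞) ω := by
                apply Finset.sum_le_sum
                intro k hk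
                have hkN : (k:ℝ) < Y ω / c := by
                  exact_mod_cast Nat.lt_ceil.mp (Finset.mem_range.mp hk)
                have hmem : ω ∈ {ω | c * (k:ℝ) < Y ω} := by
                  simp only [Set.mem_setOf_eq]
                  calc c * (k:ℝ) < c * (Y ω / c) := by nlinarith
                    _ = Y ω := by field_simp
                rw [Set.indicator_of_mem hmem]
                exact le_rfl
            _ ≤ ∑' k : ℕ, ({ω | c * (k:ℝ) < Y ω}).indicator (1 : Ω → ℝ≥0∞) ω :=
                ENNReal.sum_le_tsum _
      _ = ENNReal.ofReal c * ∑' k : ℕ, μ {ω | c * (k:ℝ) < Y ω} := by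
          rw [lintegral_const_mul _ (by
            exact Measurable.ennreal_tsum fun k => measurable_one.indicator (hms k)),
            lintegral_tsum (fun k => ((measurable_one.indicator (hms k))).aemeasurable)]
          congr 1
          exact tsum_congr fun k => lintegral_indicator_one (hms k)
  exact key.trans_lt (ENNReal.mul_lt_top ENNReal.ofReal_lt_top h.lt_top)



lemma my_exponentialPDFReal_of_nonneg {lam x : ℝ} (hx : 0 ≤ x) :
    exponentialPDFReal lam x = lam * Real.exp (-(lam * x)) := by
  unfold exponentialPDFReal gammaPDFReal
  rw [if_pos hx]
  simp [Real.rpow_one, Real.Gamma_one, Real.rpow_zero]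

lemma my_integrable_id_expMeasure {lam : ℝ} (hlam : 0 < lam) :
    Integrable id (expMeasure lam) := by
  have hpdf_meas : Measurable (exponentialPDF lam) :=
    (measurable_exponentialPDFReal lam).ennreal_ofReal
  have hexp : expMeasure lam = (volume : Measure ℝ).withDensity (exponentialPDF lam) := rfl
  rw [hexp, integrable_withDensity_iff hpdf_meas (ae_of_all _ fun x => ENNReal.ofReal_lt_top)]
  have htoReal : ∀ x : ℝ, (exponentialPDF lam x).toReal = exponentialPDFReal lam x := fun x =>
    ENNReal.toReal_ofReal (exponentialPDFReal_nonneg hlam x)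
  have hmeas : AEStronglyMeasurable (fun x : ℝ => id x * (exponentialPDF lam x).toReal)
      (volume : Measure ℝ) := by
    refine (measurable_id.mul ?_).aestronglyMeasurable
    simpa [htoReal] using (measurable_exponentialPDFReal lam)
  rw [← integrableOn_univ, ← Set.Iio_union_Ici (a := (0:ℝ)), integrableOn_union]
  constructor
  · refine (integrableOn_congr_fun (fun x hx => ?_) measurableSet_Iio).mpr
      (integrableOn_zero (ε' := ℝ))
    have : exponentialPDFReal lam x = 0 := by
      unfold exponentialPDFReal gammaPDFReal
      rw [if_neg (not_le.mpr hx)]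
    simp [htoReal, this]
  · have hg : IntegrableOn (fun x : ℝ => 2 * Real.exp (-(lam/2) * x)) (Ici 0) := by
      exact ((exp_neg_integrableOn_Ioi (-1) (half_pos hlam)).mono_set
        (fun x hx => lt_of_lt_of_le (by norm_num : (-1:ℝ) < 0) (Set.mem_Ici.mp hx))).const_mul 2
    refine Integrable.mono' hg hmeas.restrict ?_
    rw [ae_restrict_iff' measurableSet_Ici]
    refine ae_of_all _ fun x hx => ?_
    have hx0 : (0:ℝ) ≤ x := hx
    rw [Real.norm_eq_abs, htoReal, my_exponentialPDFReal_of_nonneg hx0, id]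
    have habs : |x * (lam * Real.exp (-(lam * x)))| = x * (lam * Real.exp (-(lam * x))) :=
      abs_of_nonneg (by positivity)
    rw [habs]
    have h1 : lam * x / 2 ≤ Real.exp (lam * x / 2) :=
      le_trans (by linarith) (Real.add_one_le_exp _)
    calc x * (lam * Real.exp (-(lam * x)))
        = 2 * (lam * x / 2) * Real.exp (-(lam * x)) := by ring
      _ ≤ 2 * Real.exp (lam * x / 2) * Real.exp (-(lam * x)) := by
          have := Real.exp_pos (-(lam * x))
          nlinarith
      _ = 2 * Real.exp (lam * x / 2 + -(lam * x)) := by rw [Real.exp_add]; ring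
      _ = 2 * Real.exp (-(lam/2) * x) := by ring_nf

lemma my_expMeasure_mean_pos {lam : ℝ} (hlam : 0 < lam) :
    0 < ∫ x, x ∂(expMeasure lam) := by
  have : IsProbabilityMeasure (expMeasure lam) := isProbabilityMeasure_expMeasure hlam
  have hIio : expMeasure lam (Iio 0) = 0 := by
    rw [show expMeasure lam = (volume : Measure ℝ).withDensity (exponentialPDF lam) from rfl,
      withDensity_apply _ measurableSet_Iio]
    exact lintegral_exponentialPDF_of_nonpos le_rfl
  have hnn : (0 : ℝ → ℝ) ≤ᵐ[expMeasure lam] id := by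
    have hset : {x : ℝ | ¬ (0:ℝ→ℝ) x ≤ id x} = Iio 0 := by ext x; simp [not_le]
    exact (ae_iff).mpr (by rw [hset]; exact hIio)
  have h := (integral_pos_iff_support_of_nonneg_ae hnn (my_integrable_id_expMeasure hlam)).mpr ?_
  · simpa using h
  · have h0 : expMeasure lam {(0:ℝ)} = 0 :=
      (withDensity_absolutelyContinuous (volume : Measure ℝ) _) (volume_singleton)
    have hIic : expMeasure lam (Iic 0) = 0 := by
      rw [← Set.Iio_union_right]
      exact measure_union_null hIio h0
    have hIoi : expMeasure lam (Ioi 0) = 1 := by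
      rw [← Set.compl_Iic, prob_compl_eq_one_sub measurableSet_Iic, hIic, tsub_zero]
    have hsub : Ioi (0:ℝ) ⊆ Function.support (id : ℝ → ℝ) := fun x hx => ne_of_gt hx
    calc (0:ℝ≥0∞) < 1 := zero_lt_one
      _ = expMeasure lam (Ioi 0) := hIoi.symm
      _ ≤ expMeasure lam (Function.support id) := measure_mono hsub

end AuxLemmas

/-- The type family for the combined family of arrival increments (`ℝ`-valued, index
`Sum.inl k`) and jumps (`ℝ^d`-valued, index `Sum.inr k`). -/
abbrev jointType (d : ℕ) : ℕ ⊕ ℕ → Type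
  | .inl _ => ℝ
  | .inr _ => EuclideanSpace ℝ (Fin d)

/-- The measurable space structures on the combined family. -/
def jointMS (d : ℕ) : (i : ℕ ⊕ ℕ) → MeasurableSpace (jointType d i)
  | .inl _ => inferInstance
  | .inr _ => inferInstance

/-- The combined family of random variables: the increments `E k` and the jumps `ξ k`. -/
def jointFam {Ω : Type*} {d : ℕ} (E : ℕ → Ω → ℝ)
    (ξ : ℕ → Ω → EuclideanSpace ℝ (Fin d)) : (i : ℕ ⊕ ℕ) → Ω → jointType d i
  | .inl k => E k
  | .inr k => ξ k

/-- **Example 1 of Section 4.** Let `τ_k` be the arrival times of a Poisson process with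
intensity `λ` (partial sums of i.i.d. rate-`λ` exponentials `E_k`) and let `(ξ_k)` be
i.i.d. `ℝ^d`-valued random variables independent of `(E_k)`. Then `Σ_k e^{−τ_k} ξ_k`
converges a.s. iff `E[log(1+‖ξ₁‖)] < ∞`. -/
theorem exp_shot_noise_series_converges_iff_log_moment
    {Ω : Type*} [MeasurableSpace Ω] (P : Measure Ω) [IsProbabilityMeasure P]
    {d : ℕ} (lam : ℝ) (hlam : 0 < lam)
    (E : ℕ → Ω → ℝ) (ξ : ℕ → Ω → EuclideanSpace ℝ (Fin d))
    (hEm : ∀ k, Measurable (E k)) (hξm : ∀ k, Measurable (ξ k))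
    (hindep : iIndepFun (m := jointMS d) (jointFam E ξ) P)
    (hE : ∀ k, Measure.map (E k) P = expMeasure lam)
    (hξ : ∀ k, Measure.map (ξ k) P = Measure.map (ξ 0) P) :
    (∀ᵐ ω ∂P, ∃ l : EuclideanSpace ℝ (Fin d),
        Tendsto (fun n => ∑ k ∈ Finset.range n,
            Real.exp (-(∑ i ∈ Finset.range (k + 1), E i ω)) • ξ k ω)
          atTop (nhds l)) ↔
      ∫⁻ ω, ENNReal.ofReal (Real.log (1 + ‖ξ 0 ω‖)) ∂P < ⊤ := by
  classical
  have hlogmeas : Measurable (fun x : EuclideanSpace ℝ (Fin d) => Real.log (1 + ‖x‖)) :=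
    Real.measurable_log.comp (measurable_const.add measurable_norm)
  have hYm : Measurable (fun ω => Real.log (1 + ‖ξ 0 ω‖)) := hlogmeas.comp (hξm 0)
  have hYnn : ∀ ω, 0 ≤ Real.log (1 + ‖ξ 0 ω‖) := fun ω =>
    Real.log_nonneg (by linarith [norm_nonneg (ξ 0 ω)])
  have htail : ∀ (a : ℝ) (k : ℕ),
      P {ω | a < Real.log (1 + ‖ξ k ω‖)} = P {ω | a < Real.log (1 + ‖ξ 0 ω‖)} := by
    intro a k
    have hB : MeasurableSet {x : EuclideanSpace ℝ (Fin d) | a < Real.log (1 + ‖x‖)} :=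
      measurableSet_lt measurable_const hlogmeas
    have h1 : {ω | a < Real.log (1 + ‖ξ k ω‖)} = ξ k ⁻¹' {x | a < Real.log (1 + ‖x‖)} := rfl
    have h2 : {ω | a < Real.log (1 + ‖ξ 0 ω‖)} = ξ 0 ⁻¹' {x | a < Real.log (1 + ‖x‖)} := rfl
    rw [h1, h2, ← Measure.map_apply (hξm k) hB, ← Measure.map_apply (hξm 0) hB, hξ k]
  have hindepE : Pairwise (Function.onFun (IndepFun · · P) E) := by
    intro i j hij
    exact hindep.indepFun (show (Sum.inl i : ℕ ⊕ ℕ) ≠ Sum.inl j by simp [hij])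
  have hidE : ∀ i, IdentDistrib (E i) (E 0) P P := fun i =>
    ⟨(hEm i).aemeasurable, (hEm 0).aemeasurable, by rw [hE i, hE 0]⟩
  have hintE : Integrable (E 0) P := by
    have h := (integrable_map_measure (f := E 0) (g := id)
      (by rw [hE 0]; exact (my_integrable_id_expMeasure hlam).aestronglyMeasurable)
      (hEm 0).aemeasurable).mp (by rw [hE 0]; exact my_integrable_id_expMeasure hlam)
    simpa [Function.id_comp] using h
  set μ0 : ℝ := ∫ ω, E 0 ω ∂P with hμ0def
  have hμ0 : 0 < μ0 := by
    have hmeanmap : ∫ x, x ∂(Measure.map (E 0) P) = ∫ ω, E 0 ω ∂P :=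
      integral_map (hEm 0).aemeasurable aestronglyMeasurable_id
    have h := my_expMeasure_mean_pos hlam
    rw [← hE 0, hmeanmap] at h
    exact h
  have hslln := ProbabilityTheory.strong_law_ae E hintE hindepE hidE
  have hτ : ∀ᵐ ω ∂P, ∀ᶠ k : ℕ in atTop,
      μ0/2 * ((k:ℝ)+1) ≤ (∑ i ∈ Finset.range (k+1), E i ω) ∧
      (∑ i ∈ Finset.range (k+1), E i ω) ≤ 2*μ0 * ((k:ℝ)+1) := by
    filter_upwards [hslln] with ω hω
    have h1 : ∀ᶠ n : ℕ in atTop,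
        (n:ℝ)⁻¹ • (∑ i ∈ Finset.range n, E i ω) ∈ Set.Ioo (μ0/2) (2*μ0) :=
      hω.eventually (Ioo_mem_nhds (by linarith) (by linarith))
    have h2 := (tendsto_add_atTop_nat 1).eventually h1
    filter_upwards [h2] with k hk
    simp only [Set.mem_Ioo, smul_eq_mul] at hk
    obtain ⟨ha, hb⟩ := hk
    have hkpos : (0:ℝ) < ((k+1 : ℕ):ℝ) := by positivity
    have hcast : ((k+1:ℕ):ℝ) = (k:ℝ)+1 := by push_cast; ring
    constructor
    · have h3 := mul_lt_mul_of_pos_left ha hkpos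
      rw [← mul_assoc, mul_inv_cancel₀ hkpos.ne', one_mul, hcast] at h3
      nlinarith
    · have h3 := mul_lt_mul_of_pos_left hb hkpos
      rw [← mul_assoc, mul_inv_cancel₀ hkpos.ne', one_mul, hcast] at h3
      nlinarith
  constructor
  · -- convergence → finite log moment
    intro hconv
    set C : ℝ := 1 + 4*μ0 with hCdef
    have hCpos : 0 < C := by linarith
    have hBmeas : ∀ k : ℕ,
        MeasurableSet {x : EuclideanSpace ℝ (Fin d) | C * (k:ℝ) < Real.log (1+‖x‖)} :=
      fun k => measurableSet_lt measurable_const hlogmeas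
    have hBindep : iIndepSet
        (fun k : ℕ => ξ k ⁻¹' {x | C * (k:ℝ) < Real.log (1+‖x‖)}) P := by
      rw [iIndepSet_iff_meas_biInter (fun k => (hξm k) (hBmeas k))]
      intro s
      have h := hindep.measure_inter_preimage_eq_mul
        (S := s.map ⟨Sum.inr, Sum.inr_injective⟩)
        (sets := fun i => match i with
          | .inl _ => Set.univ
          | .inr k => {x | C * (k:ℝ) < Real.log (1+‖x‖)})
        (by
          rintro i hi
          rw [Finset.mem_map] at hi
          obtain ⟨k, _, rfl⟩ := hi
          exact hBmeas k)
      rw [Finset.prod_map] at h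
      convert h using 2
      ext ω
      simp only [Set.mem_iInter, Finset.mem_map, Function.Embedding.coeFn_mk]
      constructor
      · rintro hω i ⟨k, hk, rfl⟩
        exact hω k hk
      · intro hω k hk
        exact hω (Sum.inr k) ⟨k, hk, rfl⟩
      rfl
    have hnot : ∀ᵐ ω ∂P, ∀ᶠ k : ℕ in atTop,
        ω ∉ ξ k ⁻¹' {x | C * (k:ℝ) < Real.log (1+‖x‖)} := by
      filter_upwards [hτ, hconv] with ω h1 h2
      obtain ⟨l, hl⟩ := h2
      have hterm : Tendsto (fun k => Real.exp (-(∑ i ∈ Finset.range (k + 1), E i ω)) • ξ k ω)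
          atTop (𝓝 (0 : EuclideanSpace ℝ (Fin d))) := by
        have h3 := (hl.comp (tendsto_add_atTop_nat 1)).sub hl
        rw [sub_self] at h3
        refine h3.congr fun n => ?_
        simp [Function.comp, Finset.sum_range_succ]
      have h4 : ∀ᶠ k : ℕ in atTop,
          ‖Real.exp (-(∑ i ∈ Finset.range (k + 1), E i ω)) • ξ k ω‖ < 1 := by
        filter_upwards [hterm.eventually
          (Metric.ball_mem_nhds (0 : EuclideanSpace ℝ (Fin d)) one_pos)] with k hk
        simpa [mem_ball_zero_iff] using hk
      filter_upwards [h1, h4, eventually_ge_atTop 1] with k hk1 hk4 hk3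
      intro hmem
      simp only [Set.mem_preimage, Set.mem_setOf_eq] at hmem
      set τ := ∑ i ∈ Finset.range (k + 1), E i ω with hτdef
      obtain ⟨hlow, hhigh⟩ := hk1
      have hk1' : (1:ℝ) ≤ (k:ℝ) := by exact_mod_cast hk3
      have hτ0 : 0 ≤ τ := le_trans (by nlinarith) hlow
      have hξk : ‖ξ k ω‖ ≤ Real.exp τ := by
        rw [norm_smul, Real.norm_eq_abs, Real.abs_exp] at hk4
        have hmul : Real.exp τ * Real.exp (-τ) = 1 := by
          rw [← Real.exp_add]; simp
        nlinarith [Real.exp_pos τ, Real.exp_pos (-τ), norm_nonneg (ξ k ω)]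
      have hlog : Real.log (1 + ‖ξ k ω‖) ≤ Real.log 2 + τ := by
        have h6 : 1 ≤ Real.exp τ := Real.one_le_exp hτ0
        calc Real.log (1 + ‖ξ k ω‖) ≤ Real.log (2 * Real.exp τ) :=
            Real.log_le_log (by positivity) (by linarith)
          _ = Real.log 2 + τ := by
            rw [Real.log_mul two_ne_zero (Real.exp_ne_zero τ), Real.log_exp]
      have hlog2 : Real.log 2 ≤ 1 :=
        le_trans (Real.log_le_sub_one_of_pos two_pos) (by norm_num)
      have hcontr : Real.log (1 + ‖ξ k ω‖) ≤ C * k := by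
        rw [hCdef]; nlinarith
      exact absurd hmem (not_lt.mpr hcontr)
    have hzero : P (limsup (fun k : ℕ =>
        ξ k ⁻¹' {x | C * (k:ℝ) < Real.log (1+‖x‖)}) atTop) = 0 := by
      rw [measure_eq_zero_iff_ae_notMem]
      filter_upwards [hnot] with ω hω
      rw [mem_limsup_iff_frequently_mem]
      exact fun hf => (hf.and_eventually hω).exists.elim fun k hk => hk.2 hk.1
    have hsum : ∑' k : ℕ, P (ξ k ⁻¹' {x | C * (k:ℝ) < Real.log (1+‖x‖)}) ≠ ⊤ := by
      intro htop
      have hone := ProbabilityTheory.measure_limsup_eq_one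
        (fun k => (hξm k) (hBmeas k)) hBindep htop
      rw [hzero] at hone
      exact zero_ne_one hone
    have heq : ∀ k : ℕ, P (ξ k ⁻¹' {x | C * (k:ℝ) < Real.log (1+‖x‖)})
        = P {ω | C * (k:ℝ) < Real.log (1 + ‖ξ 0 ω‖)} := fun k => htail _ k
    have hsum' : ∑' k : ℕ, P {ω | C * (k:ℝ) < Real.log (1 + ‖ξ 0 ω‖)} ≠ ⊤ :=
      (tsum_congr heq) ▸ hsum
    exact my_lintegral_lt_top_of_tail_sum P hYm hYnn hCpos hsum'
  · -- finite log moment → convergence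
    intro hint
    have hc4 : 0 < μ0/4 := by linarith
    have hsumA : ∑' k : ℕ, P {ω | μ0/4 * (k:ℝ) < Real.log (1 + ‖ξ k ω‖)} ≠ ⊤ := by
      have h := my_tail_sum_ne_top P hYm hYnn hc4 hint.ne
      have heq : ∀ k : ℕ, P {ω | μ0/4 * (k:ℝ) < Real.log (1 + ‖ξ k ω‖)}
          = P {ω | μ0/4 * (k:ℝ) < Real.log (1 + ‖ξ 0 ω‖)} := fun k => htail _ k
      rw [tsum_congr heq]
      exact h
    have hBC := measure_limsup_atTop_eq_zero hsumA
    have hae2 : ∀ᵐ ω ∂P, ∀ᶠ k : ℕ in atTop,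
        ¬ (μ0/4 * (k:ℝ) < Real.log (1 + ‖ξ k ω‖)) := by
      filter_upwards [measure_eq_zero_iff_ae_notMem.mp hBC] with ω hω
      rw [mem_limsup_iff_frequently_mem] at hω
      exact Filter.not_frequently.mp hω
    filter_upwards [hτ, hae2] with ω h1 h2
    have hsummable : Summable
        (fun k => Real.exp (-(∑ i ∈ Finset.range (k + 1), E i ω)) • ξ k ω) := by
      apply Summable.of_norm_bounded_eventually_nat (g := fun k => Real.exp (-(μ0/4)) ^ k)
      · exact summable_geometric_of_lt_one (Real.exp_nonneg _)
          (Real.exp_lt_one_iff.mpr (by linarith))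
      · filter_upwards [h1, h2] with k hk1 hk2
        obtain ⟨hlow, _⟩ := hk1
        have hlogk : Real.log (1 + ‖ξ k ω‖) ≤ μ0/4 * k := not_lt.mp hk2
        have hξk : ‖ξ k ω‖ ≤ Real.exp (μ0/4 * k) := by
          have hpos : (0:ℝ) < 1 + ‖ξ k ω‖ := by linarith [norm_nonneg (ξ k ω)]
          have h5 := (Real.log_le_iff_le_exp hpos).mp hlogk
          linarith
        rw [norm_smul, Real.norm_eq_abs, Real.abs_exp]
        calc Real.exp (-(∑ i ∈ Finset.range (k + 1), E i ω)) * ‖ξ k ω‖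
            ≤ Real.exp (-(μ0/2 * ((k:ℝ)+1))) * Real.exp (μ0/4 * k) := by
              apply mul_le_mul ?_ hξk (norm_nonneg _) (Real.exp_nonneg _)
              exact Real.exp_le_exp.mpr (by linarith)
          _ = Real.exp (-(μ0/2 * ((k:ℝ)+1)) + μ0/4 * k) := (Real.exp_add _ _).symm
          _ ≤ Real.exp ((k:ℝ) * (-(μ0/4))) := Real.exp_le_exp.mpr (by nlinarith)
          _ = Real.exp (-(μ0/4)) ^ k := Real.exp_nat_mul _ k
    exact ⟨∑' k, Real.exp (-(∑ i ∈ Finset.range (k + 1), E i ω)) • ξ k ω,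
      hsummable.hasSum.tendsto_sum_nat⟩
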